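/- Let p(x) = x^n + a_{n−1}x^{n−1} + ⋯ + a_0 be a monic real polynomial of degree n and let q ∈ ℝ[x] with deg q < n. Then q(C_p) = P_CH^T · H_n(q/p). -/

import Mathlib

open Polynomial Matrix BigOperators Finset

/-- The companion matrix of `p(x) = x^n + a_{n-1}x^{n-1} + ⋯ + a_0`: 1's on the first
subdiagonal, last column `(−a_0, …, −a_{n-1})ᵀ`, zeros elsewhere. -/
def companion (n : ℕ) (p : Polynomial ℝ) : Matrix (Fin n) (Fin n) ℝ :=
  Matrix.of fun i j =>
    if (j : ℕ) = n - 1 then -p.coeff (i : ℕ)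
    else if (i : ℕ) = (j : ℕ) + 1 then 1
    else 0

/-- `P_CH`: the Hankel matrix with `(i,j)`-entry `a_{i+j+1}` (with `a_n = 1`,
`a_k = 0` for `k > n`). -/
noncomputable def pCH (n : ℕ) (p : Polynomial ℝ) : Matrix (Fin n) (Fin n) ℝ :=
  Matrix.of fun i j : Fin n => p.coeff ((i : ℕ) + (j : ℕ) + 1)

/-- The coefficients `(s_j)` of the expansion `q(x)/p(x) = Σ_{j≥0} s_j·x^{−j−1}` at
infinity: `s_j` is the `j`-th coefficient of the formal power series
`t^{n−1}q(1/t) · (t^n p(1/t))⁻¹`. -/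
noncomputable def hankelSeq (n : ℕ) (p q : Polynomial ℝ) : ℕ → ℝ := fun j =>
  PowerSeries.coeff (R := ℝ) j
    (((Polynomial.reflect (n - 1) q : Polynomial ℝ) : PowerSeries ℝ) *
      ((Polynomial.reflect n p : Polynomial ℝ) : PowerSeries ℝ)⁻¹)

/-- The Hankel matrix `H_n(q/p) = (s_{i+j})_{0≤i,j≤n−1}`. -/
noncomputable def hankelMat (n : ℕ) (p q : Polynomial ℝ) : Matrix (Fin n) (Fin n) ℝ :=
  Matrix.of fun i j : Fin n => hankelSeq n p q ((i : ℕ) + (j : ℕ))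

section Aux

variable {n : ℕ} {p q : Polynomial ℝ}

private lemma coeff_zero_of_deg_lt (hq : q.degree < (n : WithBot ℕ)) {m : ℕ} (hm : n ≤ m) :
    q.coeff m = 0 :=
  (Polynomial.degree_lt_iff_coeff_zero q n).mp hq m (by exact_mod_cast hm)

private lemma pP_mul_inv (hp : p.Monic) (hpdeg : p.natDegree = n) :
    ((reflect n p : Polynomial ℝ) : PowerSeries ℝ) *
      ((reflect n p : Polynomial ℝ) : PowerSeries ℝ)⁻¹ = 1 := by
  apply PowerSeries.mul_inv_cancel
  rw [Polynomial.constantCoeff_coe, coeff_reflect, revAt_zero, ← hpdeg, hp.coeff_natDegree]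
  exact one_ne_zero

private lemma P_mul_S (hp : p.Monic) (hpdeg : p.natDegree = n) :
    ((reflect n p : Polynomial ℝ) : PowerSeries ℝ) *
      (((reflect (n - 1) q : Polynomial ℝ) : PowerSeries ℝ) *
        ((reflect n p : Polynomial ℝ) : PowerSeries ℝ)⁻¹) =
      ((reflect (n - 1) q : Polynomial ℝ) : PowerSeries ℝ) := by
  rw [← mul_assoc, mul_comm ((reflect n p : Polynomial ℝ) : PowerSeries ℝ)
    ((reflect (n - 1) q : Polynomial ℝ) : PowerSeries ℝ), mul_assoc, pP_mul_inv hp hpdeg, mul_one]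

private lemma key (hn : 1 ≤ n) (hp : p.Monic) (hpdeg : p.natDegree = n)
    (hq : q.degree < (n : WithBot ℕ)) {i : ℕ} (hi : i < n) :
    q.coeff i = ∑ k ∈ range n, p.coeff (k + i + 1) * hankelSeq n p q k := by
  have h := congrArg (PowerSeries.coeff (R := ℝ) (n - 1 - i)) (P_mul_S (q := q) hp hpdeg)
  rw [PowerSeries.coeff_mul, Finset.Nat.sum_antidiagonal_eq_sum_range_succ
    (fun a b => (PowerSeries.coeff (R := ℝ) a) ((reflect n p : Polynomial ℝ) : PowerSeries ℝ) *
      (PowerSeries.coeff (R := ℝ) b) (((reflect (n - 1) q : Polynomial ℝ) : PowerSeries ℝ) *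
        ((reflect n p : Polynomial ℝ) : PowerSeries ℝ)⁻¹))] at h
  rw [Polynomial.coeff_coe, coeff_reflect, revAt_le (by omega)] at h
  have hri : n - 1 - (n - 1 - i) = i := by omega
  rw [hri] at h
  -- h : ∑ k in range (n-1-i+1), coeff k P * coeff (n-1-i-k) S = q.coeff i
  rw [← h]
  have e1 : ∑ k ∈ range n, p.coeff (k + i + 1) * hankelSeq n p q k
      = ∑ k ∈ range (n - 1 - i + 1), p.coeff (k + i + 1) * hankelSeq n p q k := by
    refine (Finset.sum_subset ?_ ?_).symm
    · intro k hk
      simp only [Finset.mem_range] at hk ⊢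
      omega
    · intro k hk hk2
      simp only [Finset.mem_range] at hk hk2
      have : p.natDegree < k + i + 1 := by omega
      rw [Polynomial.coeff_eq_zero_of_natDegree_lt this, zero_mul]
  rw [e1, ← Finset.sum_range_reflect]
  refine Finset.sum_congr rfl ?_
  intro k hk
  simp only [Finset.mem_range] at hk
  have e0 : (n - 1 - i).succ - 1 - k = n - 1 - i - k := by omega
  have e2 : n - 1 - i - (n - 1 - i - k) = k := by omega
  rw [e0, e2, Polynomial.coeff_coe, coeff_reflect,
    revAt_le (by omega : n - 1 - i - k ≤ n)]
  have e3 : n - (n - 1 - i - k) = k + i + 1 := by omega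
  rw [e3]
  rfl

private lemma degree_r_lt (hn : 1 ≤ n) (hp : p.Monic) (hpdeg : p.natDegree = n)
    (hq : q.degree < (n : WithBot ℕ)) :
    (X * q - C (q.coeff (n - 1)) * p).degree < (n : WithBot ℕ) := by
  rw [Polynomial.degree_lt_iff_coeff_zero]
  intro m hm
  have hm' : n ≤ m := by exact_mod_cast hm
  obtain ⟨k, rfl⟩ : ∃ k, m = k + 1 := ⟨m - 1, by omega⟩
  rw [Polynomial.coeff_sub, Polynomial.coeff_X_mul, Polynomial.coeff_C_mul]
  rcases eq_or_lt_of_le hm' with h | h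
  · have hpn : p.coeff n = 1 := by rw [← hpdeg]; exact hp.coeff_natDegree
    have hk : k = n - 1 := by omega
    have e : n - 1 + 1 = n := by omega
    rw [hk, e, hpn, mul_one, sub_self]
  · rw [coeff_zero_of_deg_lt hq (by omega : n ≤ k),
      Polynomial.coeff_eq_zero_of_natDegree_lt (by omega : p.natDegree < k + 1),
      mul_zero, sub_zero]

private lemma reflect_identity (hn : 1 ≤ n) (hp : p.Monic) (hpdeg : p.natDegree = n)
    (hq : q.degree < (n : WithBot ℕ)) :
    X * reflect (n - 1) (X * q - C (q.coeff (n - 1)) * p)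
      = reflect (n - 1) q - C (q.coeff (n - 1)) * reflect n p := by
  have hr := degree_r_lt hn hp hpdeg hq
  set c := q.coeff (n - 1) with hc
  set r := X * q - C c * p with hrdef
  have hpc : ∀ m, n < m → p.coeff m = 0 := fun m hm =>
    Polynomial.coeff_eq_zero_of_natDegree_lt (by omega)
  have hqc : ∀ m, n ≤ m → q.coeff m = 0 := fun m hm => coeff_zero_of_deg_lt hq hm
  have hrc : ∀ m, n ≤ m → r.coeff m = 0 := fun m hm => coeff_zero_of_deg_lt hr hm
  have hpn : p.coeff n = 1 := by rw [← hpdeg]; exact hp.coeff_natDegree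
  ext m
  rcases m with _ | k
  · simp only [Polynomial.mul_coeff_zero, Polynomial.coeff_X_zero, zero_mul,
      Polynomial.coeff_sub, Polynomial.coeff_C_mul, Polynomial.coeff_C_zero,
      coeff_reflect, revAt_zero]
    simp [hpn, hc]
  · rw [Polynomial.coeff_X_mul, Polynomial.coeff_sub, Polynomial.coeff_C_mul,
      coeff_reflect, coeff_reflect, coeff_reflect]
    rcases lt_trichotomy k (n - 1) with h | h | h
    · rw [revAt_le (by omega : k ≤ n - 1), revAt_le (by omega : k + 1 ≤ n - 1),
        revAt_le (by omega : k + 1 ≤ n)]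
      rw [hrdef]
      rw [Polynomial.coeff_sub, Polynomial.coeff_C_mul]
      have e1 : n - 1 - k = (n - 1 - (k + 1)) + 1 := by omega
      rw [e1, Polynomial.coeff_X_mul]
      have e2 : n - 1 - (k + 1) + 1 = n - (k + 1) := by omega
      rw [e2]
    · subst h
      rw [revAt_le (le_refl (n - 1)), Nat.sub_self]
      rw [revAt_eq_self_of_lt (by omega : n - 1 < n - 1 + 1),
        revAt_le (by omega : n - 1 + 1 ≤ n)]
      rw [hrdef, Polynomial.coeff_sub, Polynomial.coeff_C_mul,
        Polynomial.mul_coeff_zero, Polynomial.coeff_X_zero, zero_mul,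
        hqc (n - 1 + 1) (by omega)]
      have : n - (n - 1 + 1) = 0 := by omega
      rw [this]
    · rw [revAt_eq_self_of_lt (by omega : n - 1 < k),
        revAt_eq_self_of_lt (by omega : n - 1 < k + 1),
        revAt_eq_self_of_lt (by omega : n < k + 1)]
      rw [hrc k (by omega), hqc (k + 1) (by omega), hpc (k + 1) (by omega),
        mul_zero, sub_zero]

private lemma hankelSeq_shift (hn : 1 ≤ n) (hp : p.Monic) (hpdeg : p.natDegree = n)
    (hq : q.degree < (n : WithBot ℕ)) (m : ℕ) :
    hankelSeq n p (X * q - C (q.coeff (n - 1)) * p) m = hankelSeq n p q (m + 1) := by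
  have hid := reflect_identity hn hp hpdeg hq
  set c := q.coeff (n - 1) with hc
  set r := X * q - C c * p with hrdef
  have hps : (PowerSeries.X : PowerSeries ℝ) * ((reflect (n - 1) r : Polynomial ℝ) : PowerSeries ℝ)
      = ((reflect (n - 1) q : Polynomial ℝ) : PowerSeries ℝ)
        - PowerSeries.C c * ((reflect n p : Polynomial ℝ) : PowerSeries ℝ) := by
    rw [← Polynomial.coe_X, ← Polynomial.coe_C, ← Polynomial.coe_mul, ← Polynomial.coe_mul,
      ← Polynomial.coe_sub, hid]
  have h2 := congrArg
    (fun φ : PowerSeries ℝ => φ * ((reflect n p : Polynomial ℝ) : PowerSeries ℝ)⁻¹) hps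
  rw [mul_assoc, sub_mul, mul_assoc, pP_mul_inv hp hpdeg, mul_one] at h2
  have h3 := congrArg (PowerSeries.coeff (R := ℝ) (m + 1)) h2
  rw [PowerSeries.coeff_succ_X_mul, map_sub, PowerSeries.coeff_C] at h3
  simp only [Nat.succ_ne_zero, if_false, sub_zero] at h3
  exact h3

private lemma companion_pow_col0 (hn : 1 ≤ n) :
    ∀ d, d < n → ∀ i : Fin n,
      (companion n p ^ d) i ⟨0, hn⟩ = if (i : ℕ) = d then 1 else 0 := by
  intro d
  induction d with
  | zero =>
    intro hd i
    rw [pow_zero, Matrix.one_apply]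
    simp [Fin.ext_iff]
  | succ d ih =>
    intro hd i
    rw [pow_succ', Matrix.mul_apply]
    rw [Finset.sum_eq_single (⟨d, by omega⟩ : Fin n)]
    · rw [ih (by omega)]
      simp only [if_pos rfl, mul_one]
      have hd1 : d ≠ n - 1 := by omega
      simp [companion, hd1]
    · intro k _ hk
      rw [ih (by omega) k]
      have : (k : ℕ) ≠ d := fun h => hk (Fin.ext h)
      rw [if_neg this, mul_zero]
    · intro h
      exact absurd (Finset.mem_univ _) h

private lemma natDegree_lt_of_degree_lt (hn : 1 ≤ n) (hq : q.degree < (n : WithBot ℕ)) :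
    q.natDegree < n := by
  rcases eq_or_ne q 0 with rfl | h
  · rw [Polynomial.natDegree_zero]; exact hn
  · exact (Polynomial.natDegree_lt_iff_degree_lt h).mpr hq

private lemma aeval_col0 (hn : 1 ≤ n) (hq : q.degree < (n : WithBot ℕ)) (i : Fin n) :
    (Polynomial.aeval (companion n p) q) i ⟨0, hn⟩ = q.coeff (i : ℕ) := by
  rw [Polynomial.aeval_eq_sum_range' (natDegree_lt_of_degree_lt hn hq), Matrix.sum_apply]
  have : ∀ d ∈ range n, (q.coeff d • companion n p ^ d) i ⟨0, hn⟩
      = if (i : ℕ) = d then q.coeff d else 0 := by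
    intro d hd
    simp only [Finset.mem_range] at hd
    rw [Matrix.smul_apply, companion_pow_col0 hn d hd i, smul_eq_mul]
    split_ifs <;> simp
  rw [Finset.sum_congr rfl this]
  rw [Finset.sum_ite_eq (range n) (i : ℕ) (fun d => q.coeff d)]
  simp [i.isLt]

private lemma aeval_p_col0 (hn : 1 ≤ n) (hp : p.Monic) (hpdeg : p.natDegree = n) (i : Fin n) :
    (Polynomial.aeval (companion n p) p) i ⟨0, hn⟩ = 0 := by
  have hdeg : p.natDegree < n + 1 := by omega
  rw [Polynomial.aeval_eq_sum_range' hdeg, Matrix.sum_apply, Finset.sum_range_succ]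
  have hCn : (companion n p ^ n) i ⟨0, hn⟩ = -p.coeff (i : ℕ) := by
    obtain ⟨m, rfl⟩ : ∃ m, n = m + 1 := ⟨n - 1, by omega⟩
    rw [pow_succ', Matrix.mul_apply]
    rw [Finset.sum_eq_single (⟨m, by omega⟩ : Fin (m + 1))]
    · rw [companion_pow_col0 hn m (by omega) ⟨m, by omega⟩]
      simp [companion]
    · intro k _ hk
      rw [companion_pow_col0 hn m (by omega) k]
      have : (k : ℕ) ≠ m := fun h => hk (Fin.ext h)
      rw [if_neg this, mul_zero]
    · intro h
      exact absurd (Finset.mem_univ _) h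
  have hsum : ∀ d ∈ range n, (p.coeff d • companion n p ^ d) i ⟨0, hn⟩
      = if (i : ℕ) = d then p.coeff d else 0 := by
    intro d hd
    simp only [Finset.mem_range] at hd
    rw [Matrix.smul_apply, companion_pow_col0 hn d hd i, smul_eq_mul]
    split_ifs <;> simp
  rw [Finset.sum_congr rfl hsum, Finset.sum_ite_eq (range n) (i : ℕ) (fun d => p.coeff d)]
  rw [Matrix.smul_apply, hCn, smul_eq_mul]
  have hpn : p.coeff n = 1 := by rw [← hpdeg]; exact hp.coeff_natDegree
  simp [i.isLt, hpn]

private lemma col_shift (A : Matrix (Fin n) (Fin n) ℝ) {j : ℕ} (hj : j + 1 < n) (i : Fin n) :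
    (A * companion n p) i ⟨j, by omega⟩ = A i ⟨j + 1, hj⟩ := by
  rw [Matrix.mul_apply]
  rw [Finset.sum_eq_single (⟨j + 1, hj⟩ : Fin n)]
  · have hj1 : j ≠ n - 1 := by omega
    simp [companion, hj1]
  · intro k _ hk
    have h1 : j ≠ n - 1 := by omega
    have h2 : (k : ℕ) ≠ j + 1 := fun h => hk (Fin.ext h)
    simp [companion, h1, h2]
  · intro h
    exact absurd (Finset.mem_univ _) h

private lemma aeval_p_zero (hn : 1 ≤ n) (hp : p.Monic) (hpdeg : p.natDegree = n) :
    Polynomial.aeval (companion n p) p = 0 := by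
  have hcomm : companion n p * Polynomial.aeval (companion n p) p
      = Polynomial.aeval (companion n p) p * companion n p := by
    have h := congrArg (Polynomial.aeval (companion n p)) (mul_comm X p)
    simpa only [_root_.map_mul, Polynomial.aeval_X] using h
  have main : ∀ j, ∀ hj : j < n, ∀ i : Fin n,
      (Polynomial.aeval (companion n p) p) i ⟨j, hj⟩ = 0 := by
    intro j
    induction j with
    | zero => intro hj i; exact aeval_p_col0 hn hp hpdeg i
    | succ j ih =>
      intro hj i
      rw [← col_shift (Polynomial.aeval (companion n p) p) hj i, ← hcomm, Matrix.mul_apply]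
      apply Finset.sum_eq_zero
      intro k _
      rw [ih (by omega) k, mul_zero]
  ext i j
  obtain ⟨j, hj⟩ := j
  rw [main j hj i]
  simp

private lemma main_lemma (hn : 1 ≤ n) (hp : p.Monic) (hpdeg : p.natDegree = n) :
    ∀ j, ∀ hj : j < n, ∀ q : Polynomial ℝ, q.degree < (n : WithBot ℕ) → ∀ i : Fin n,
      (Polynomial.aeval (companion n p) q) i ⟨j, hj⟩
        = ∑ k ∈ range n, p.coeff (k + (i : ℕ) + 1) * hankelSeq n p q (k + j) := by
  intro j
  induction j with
  | zero =>
    intro hj q hq i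
    rw [aeval_col0 hn hq i]
    simpa using key hn hp hpdeg hq i.isLt
  | succ j ih =>
    intro hj q hq i
    set c := q.coeff (n - 1) with hc
    set r := X * q - C c * p with hrdef
    have hr : r.degree < (n : WithBot ℕ) := degree_r_lt hn hp hpdeg hq
    have h1 : (Polynomial.aeval (companion n p) q) i ⟨j + 1, hj⟩
        = (Polynomial.aeval (companion n p) (q * X)) i ⟨j, by omega⟩ := by
      rw [_root_.map_mul, Polynomial.aeval_X, col_shift (Polynomial.aeval (companion n p) q) hj i]
    have h2 : (q * X : Polynomial ℝ) = r + C c * p := by rw [hrdef]; ring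
    rw [h1, h2, _root_.map_add, _root_.map_mul, Polynomial.aeval_C, aeval_p_zero hn hp hpdeg, mul_zero,
      add_zero]
    rw [ih (by omega) r hr i]
    refine Finset.sum_congr rfl ?_
    intro k _
    rw [hrdef, hc, hankelSeq_shift hn hp hpdeg hq]
    ring_nf

end Aux

/-- For `p` monic of degree `n` and `deg q < n`, `q(C_p) = P_CHᵀ · H_n(q/p)`. -/
theorem stmt_12 (n : ℕ) (hn : 1 ≤ n) (p q : Polynomial ℝ)
    (hp : p.Monic) (hpdeg : p.natDegree = n) (hq : q.degree < n) :
    Polynomial.aeval (companion n p) q = (pCH n p)ᵀ * hankelMat n p q := by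
  ext i j
  obtain ⟨j, hj⟩ := j
  rw [main_lemma hn hp hpdeg j hj q hq i, Matrix.mul_apply, ← Fin.sum_univ_eq_sum_range]
  refine Finset.sum_congr rfl ?_
  intro k _
  simp [pCH, hankelMat, Matrix.transpose_apply]
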